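/- (Correctness part of the jump-discontinuity theorem.) Let O ⊆ V be a set of core objects with |O| ≥ 2 and let L = { c(u,v) : u, v ∈ O, u ≠ v }. Then every ℓ ∈ L with ℓ < 1 is a jump discontinuity of the clustering: there exist distinct u, v ∈ O such that u R_α v holds for every α ∈ [0, ℓ) and u R_α v fails for every α ∈ [ℓ, 1). Consequently, for any α₁ < ℓ ≤ α₂ < 1, the equivalence relations R_{α₁} and R_{α₂} on O differ, and the number of equivalence classes at α₂ is strictly larger than at α₁. -/

import Mathlib

open SimpleGraph

/-- Left-open path capacity of a walk: the minimum weight over all vertices of the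
walk except the starting vertex (1 for the trivial walk). -/
noncomputable def walkCap {V : Type*} (ρ : V → ℝ) {G : SimpleGraph V} {u v : V}
    (p : G.Walk u v) : ℝ :=
  (p.support.tail.map ρ).foldr min 1

/-- Left-open inter-node capacity: supremum (= maximum) of walk capacities over
all walks from `u` to `v`. -/
noncomputable def nodeCap {V : Type*} (ρ : V → ℝ) (G : SimpleGraph V) (u v : V) : ℝ :=
  sSup {x : ℝ | ∃ p : G.Walk u v, walkCap ρ p = x}

/-- `v` is α-reachable from `u`: there is a walk from `u` to `v` all of whose
vertices except possibly the start have weight strictly greater than `α`. -/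
def AlphaReach {V : Type*} (ρ : V → ℝ) (G : SimpleGraph V) (α : ℝ) (u v : V) : Prop :=
  ∃ p : G.Walk u v, ∀ w ∈ p.support.tail, α < ρ w

/-- The number of equivalence classes ("clusters") of the relation `R_α` on the set
`O` of core objects, where `u R_α v` iff `u = v` or `c(u,v) > α`. -/
noncomputable def numClusters {V : Type*} (ρ : V → ℝ) (G : SimpleGraph V) (O : Set V)
    (α : ℝ) : ℕ :=
  Nat.card (Quot (fun a b : O => (a : V) = (b : V) ∨ α < nodeCap ρ G a b))

private lemma lt_foldr_min (α : ℝ) (l : List ℝ) :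
    α < l.foldr min 1 ↔ α < 1 ∧ ∀ x ∈ l, α < x := by
  induction l with
  | nil => simp
  | cons a l ih => simp [lt_min_iff, ih]; tauto

private lemma foldr_min_le_one (l : List ℝ) : l.foldr min 1 ≤ 1 := by
  induction l with
  | nil => simp
  | cons a l ih => exact le_trans (min_le_right _ _) ih

private lemma lt_walkCap_iff {V : Type*} (ρ : V → ℝ) {G : SimpleGraph V} {u v : V}
    (p : G.Walk u v) (α : ℝ) :
    α < walkCap ρ p ↔ α < 1 ∧ ∀ w ∈ p.support.tail, α < ρ w := by
  rw [walkCap, lt_foldr_min]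
  refine and_congr_right fun _ => ?_
  exact ⟨fun h w hw => h _ (List.mem_map_of_mem (f := ρ) hw),
    fun h x hx => by obtain ⟨w, hw, rfl⟩ := List.mem_map.1 hx; exact h w hw⟩

private lemma lt_nodeCap_iff {V : Type*} (ρ : V → ℝ) {G : SimpleGraph V}
    (hG : G.Connected) (u v : V) (α : ℝ) :
    α < nodeCap ρ G u v ↔ ∃ p : G.Walk u v, α < walkCap ρ p := by
  constructor
  · intro h
    obtain ⟨p0⟩ := hG.preconnected u v
    have h' : α < sSup {x : ℝ | ∃ p : G.Walk u v, walkCap ρ p = x} := h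
    have hne : Set.Nonempty {x : ℝ | ∃ p : G.Walk u v, walkCap ρ p = x} :=
      ⟨walkCap ρ p0, p0, rfl⟩
    obtain ⟨x, ⟨p, hp⟩, hx⟩ := exists_lt_of_lt_csSup hne h'
    exact ⟨p, hp ▸ hx⟩
  · rintro ⟨p, hp⟩
    refine lt_of_lt_of_le hp (le_csSup ⟨1, ?_⟩ ⟨p, rfl⟩)
    rintro x ⟨q, rfl⟩
    exact foldr_min_le_one _

theorem JD_correctness {V : Type*} [Fintype V] (G : SimpleGraph V) (ρ : V → ℝ)
    (hρ : ∀ v : V, 0 ≤ ρ v ∧ ρ v ≤ 1) (hG : G.Connected)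
    (O : Set V) (hO : ∀ o ∈ O, ρ o = 1) (hO2 : 2 ≤ O.ncard)
    (ℓ : ℝ) (hℓ : ∃ u ∈ O, ∃ v ∈ O, u ≠ v ∧ ℓ = nodeCap ρ G u v) (hℓ1 : ℓ < 1) :
    (∃ u ∈ O, ∃ v ∈ O, u ≠ v ∧
      (∀ α : ℝ, 0 ≤ α → α < ℓ → (u = v ∨ α < nodeCap ρ G u v)) ∧
      (∀ α : ℝ, ℓ ≤ α → α < 1 → ¬(u = v ∨ α < nodeCap ρ G u v))) ∧
    (∀ α₁ α₂ : ℝ, 0 ≤ α₁ → α₁ < ℓ → ℓ ≤ α₂ → α₂ < 1 →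
      (∃ u ∈ O, ∃ v ∈ O,
        ¬((u = v ∨ α₁ < nodeCap ρ G u v) ↔ (u = v ∨ α₂ < nodeCap ρ G u v))) ∧
      numClusters ρ G O α₁ < numClusters ρ G O α₂) := by
  obtain ⟨u, hu, v, hv, huv, hcap⟩ := hℓ
  -- the relation on O is an equivalence for every α with 0 ≤ α (< 1)
  have hequiv : ∀ α : ℝ, Equivalence
      (fun a b : O => (a : V) = (b : V) ∨ α < nodeCap ρ G a b) := by
    intro α
    constructor
    · intro a; exact Or.inl rfl
    · rintro a b (h | h)
      · exact Or.inl h.symm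
      · right
        rw [lt_nodeCap_iff ρ hG] at h ⊢
        obtain ⟨p, hp⟩ := h
        rw [lt_walkCap_iff] at hp
        refine ⟨p.reverse, (lt_walkCap_iff ρ _ α).2 ⟨hp.1, fun w hw => ?_⟩⟩
        have hw' : w ∈ p.support := by
          have : w ∈ p.reverse.support := List.mem_of_mem_tail hw
          rwa [SimpleGraph.Walk.support_reverse, List.mem_reverse] at this
        rw [SimpleGraph.Walk.support_eq_cons] at hw'
        rcases List.mem_cons.mp hw' with rfl | hw'
        · rw [hO _ a.2]; exact hp.1
        · exact hp.2 w hw'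
    · rintro a b c (h | h) (h' | h')
      · exact h ▸ Or.inl h'
      · exact Or.inr (h ▸ h')
      · exact Or.inr (h' ▸ h)
      · right
        rw [lt_nodeCap_iff ρ hG] at h h' ⊢
        obtain ⟨p, hp⟩ := h
        obtain ⟨q, hq⟩ := h'
        rw [lt_walkCap_iff] at hp hq
        refine ⟨p.append q, (lt_walkCap_iff ρ _ α).2 ⟨hp.1, fun w hw => ?_⟩⟩
        rcases (SimpleGraph.Walk.mem_tail_support_append_iff p q).mp hw with hw | hw
        · exact hp.2 w hw
        · exact hq.2 w hw
  have key : ∀ α : ℝ, ℓ ≤ α → ¬ ((u : V) = v ∨ α < nodeCap ρ G u v) := by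
    rintro α hα (h | h)
    · exact huv h
    · exact absurd (lt_of_le_of_lt hα h) (by rw [hcap]; exact lt_irrefl _)
  refine ⟨⟨u, hu, v, hv, huv, fun α _ hα => Or.inr (hcap ▸ hα), fun α hα _ => key α hα⟩,
    fun α₁ α₂ _ h1 h2 _ => ?_⟩
  have hr1 : α₁ < nodeCap ρ G u v := hcap ▸ h1
  constructor
  · exact ⟨u, hu, v, hv, fun h => key α₂ h2 (h.1 (Or.inr hr1))⟩
  · -- cardinality argument
    set r₁ := fun a b : O => (a : V) = (b : V) ∨ α₁ < nodeCap ρ G a b with hr₁def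
    set r₂ := fun a b : O => (a : V) = (b : V) ∨ α₂ < nodeCap ρ G a b with hr₂def
    have hmono : ∀ a b : O, r₂ a b → r₁ a b := by
      rintro a b (h | h)
      · exact Or.inl h
      · exact Or.inr (lt_of_le_of_lt (h1.trans_le h2).le h)
    have hOfin : Finite O := Subtype.finite
    have i1 : Fintype (Quot r₁) := Fintype.ofFinite _
    have i2 : Fintype (Quot r₂) := Fintype.ofFinite _
    let f : Quot r₂ → Quot r₁ := Quot.map id hmono
    have hsurj : Function.Surjective f := by
      intro x
      induction x using Quot.ind with
      | _ a => exact ⟨Quot.mk _ a, rfl⟩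
    have hninj : ¬ Function.Injective f := by
      intro hinj
      have heq : Quot.mk r₂ ⟨u, hu⟩ = Quot.mk r₂ ⟨v, hv⟩ := by
        apply hinj
        exact Quot.sound (Or.inr hr1)
      have := ((hequiv α₂).eqvGen_iff).1 ((Quot.eq).1 heq)
      exact key α₂ h2 this
    have := Fintype.card_lt_of_surjective_not_injective f hsurj hninj
    simpa [numClusters, Nat.card_eq_fintype_card] using this
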